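/- Let M = (K^n, ρ) be a sum-matroid of rank k on P(K^n) with n = n_1+⋯+n_ℓ, with dual M*, generalized weights d_r = d_r(M) for 1 ≤ r ≤ n−k and d_j^⊥ = d_j(M*) for 1 ≤ j ≤ k. Fix r with 1 ≤ r ≤ n−k and set t = k + r − d_r. Then for every integer s > 0 with 1 ≤ t + s ≤ k, one has d_{t+s}^⊥ ≠ n − d_r + 1. -/

import Mathlib

open Module

/-! Setup for sum-rank metric codes and sum-matroids.

We fix `ℓ` finite fields `K i` with a common extension `F` (given by algebra
structures), and block lengths `nv i`.  The ambient space `F^n` (with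
`n = ∑ i, nv i`) is modelled as the dependent product of the blocks `F^{nv i}`,
and an element of the product lattice `P(K^n)` is a tuple of `K i`-subspaces of
`K i ^ (nv i)`. -/

/-- The ambient space `F^n`, split into `ℓ` blocks of sizes `nv i`. -/
abbrev SRAmb (ℓ : ℕ) (nv : Fin ℓ → ℕ) (F : Type) : Type :=
  (i : Fin ℓ) → Fin (nv i) → F

/-- The product lattice `P(K^n)`: tuples `L` where `L i` is a `K i`-subspace of
`K i ^ (nv i)`. -/
abbrev SRLat (ℓ : ℕ) (nv : Fin ℓ → ℕ) (K : Fin ℓ → Type) [∀ i, Field (K i)] : Type :=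
  (i : Fin ℓ) → Submodule (K i) (Fin (nv i) → K i)

variable {ℓ : ℕ} {nv : Fin ℓ → ℕ} {F : Type} [Field F]
  {K : Fin ℓ → Type} [∀ i, Field (K i)] [∀ i, Algebra (K i) F]

/-- `Rk(L) = ∑ i, dim_{K i} (L i)`. -/
noncomputable def SRrk (L : SRLat ℓ nv K) : ℕ := ∑ i, finrank (K i) (L i)

/-- Orthogonal complement of a subspace of `k^m` with respect to the standard
dot product. -/
def SRorth {k : Type} [Field k] {m : ℕ} (W : Submodule k (Fin m → k)) :
    Submodule k (Fin m → k) where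
  carrier := {v | ∀ w ∈ W, ∑ t, v t * w t = 0}
  zero_mem' := by intro w hw; simp
  add_mem' := by
    intro a b ha hb w hw
    have h : ∑ t, (a + b) t * w t = (∑ t, a t * w t) + ∑ t, b t * w t := by
      simp [add_mul, Finset.sum_add_distrib]
    rw [h, ha w hw, hb w hw, add_zero]
  smul_mem' := by
    intro c a ha w hw
    have h : ∑ t, (c • a) t * w t = c * ∑ t, a t * w t := by
      simp [Finset.mul_sum, mul_assoc]
    rw [h, ha w hw, mul_zero]

/-- Componentwise orthogonal complement `L^⊥` in the lattice `P(K^n)`. -/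
def SRlatPerp (L : SRLat ℓ nv K) : SRLat ℓ nv K := fun i => SRorth (L i)

/-- The `i`-th component of the sum-rank support of `c ∈ F^n`: the `K i`-row
space of the coordinate matrix of the `i`-th block of `c` (described
basis-freely as the span of the images of the block of `c` under all
`K i`-linear functionals `F → K i`). -/
def SRsupp (c : SRAmb ℓ nv F) (i : Fin ℓ) : Submodule (K i) (Fin (nv i) → K i) :=
  Submodule.span (K i) {v | ∃ f : F →ₗ[K i] K i, v = fun t => f (c i t)}

/-- The sum-rank weight `srank(c) = Rk(supp(c))`. -/
noncomputable def SRwt (c : SRAmb ℓ nv F) : ℕ :=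
  ∑ i, finrank (K i) (SRsupp (K := K) c i)

/-- The sum-rank support space `V_L = {c ∈ F^n : supp(c) ⊆ L}`. -/
def SRVL (L : SRLat ℓ nv K) : Submodule F (SRAmb ℓ nv F) where
  carrier := {c | ∀ i, SRsupp (K := K) c i ≤ L i}
  zero_mem' := by
    intro i
    apply Submodule.span_le.mpr
    rintro v ⟨f, rfl⟩
    have h : (fun t => f ((0 : SRAmb ℓ nv F) i t)) = (0 : Fin (nv i) → K i) := by
      funext t; simp
    rw [h]
    exact (L i).zero_mem
  add_mem' := by
    intro a b ha hb i
    apply Submodule.span_le.mpr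
    rintro v ⟨f, rfl⟩
    have h : (fun t => f ((a + b) i t)) =
        (fun t => f (a i t)) + fun t => f (b i t) := by
      funext t; simp
    rw [h]
    exact (L i).add_mem (ha i (Submodule.subset_span ⟨f, rfl⟩))
      (hb i (Submodule.subset_span ⟨f, rfl⟩))
  smul_mem' := by
    intro x a ha i
    apply Submodule.span_le.mpr
    rintro v ⟨f, rfl⟩
    have h : (fun t => f ((x • a) i t)) =
        fun t => (f.comp (LinearMap.mulLeft (K i) x)) (a i t) := by
      funext t; simp [smul_eq_mul]
    rw [h]
    exact ha i (Submodule.subset_span ⟨_, rfl⟩)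

/-- The dual code `C^⊥` with respect to the standard bilinear form on `F^n`. -/
def SRdual (C : Submodule F (SRAmb ℓ nv F)) : Submodule F (SRAmb ℓ nv F) where
  carrier := {x | ∀ c ∈ C, ∑ i, ∑ t, x i t * c i t = 0}
  zero_mem' := by intro c hc; simp
  add_mem' := by
    intro a b ha hb c hc
    have h : ∑ i, ∑ t, (a + b) i t * c i t =
        (∑ i, ∑ t, a i t * c i t) + ∑ i, ∑ t, b i t * c i t := by
      simp [add_mul, Finset.sum_add_distrib]
    rw [h, ha c hc, hb c hc, add_zero]
  smul_mem' := by
    intro x a ha c hc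
    have h : ∑ i, ∑ t, (x • a) i t * c i t = x * ∑ i, ∑ t, a i t * c i t := by
      simp [Finset.mul_sum, mul_assoc]
    rw [h, ha c hc, mul_zero]

/-- `C(L) = {c ∈ C^⊥ : supp(c) ⊆ L^⊥} = C^⊥ ∩ V_{L^⊥}`. -/
def SRCL (C : Submodule F (SRAmb ℓ nv F)) (L : SRLat ℓ nv K) :
    Submodule F (SRAmb ℓ nv F) :=
  SRdual C ⊓ SRVL (SRlatPerp L)

/-- The projection `Π_L : F^n → F^{Rk L}`, `x ↦ x Aᵀ`, where
`A = diag(A_1, …, A_ℓ)` and `A_i` is the matrix whose rows are the chosen basis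
of `L i` over `K i`.  The target `F^{Rk L}` is indexed blockwise. -/
noncomputable def SRpi (L : SRLat ℓ nv K) :
    SRAmb ℓ nv F →ₗ[F] ((i : Fin ℓ) → Fin (finrank (K i) (L i)) → F) where
  toFun x := fun i j =>
    ∑ t, x i t * algebraMap (K i) F ((Module.finBasis (K i) (L i) j).val t)
  map_add' x y := by
    funext i j
    simp [add_mul, Finset.sum_add_distrib]
  map_smul' a x := by
    funext i j
    simp [Finset.mul_sum, mul_assoc]

/-- The rank function `ρ_C(L) = dim_F Π_L(C^⊥)` of the sum-matroid associated
to the code `C`. -/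
noncomputable def SRrho (C : Submodule F (SRAmb ℓ nv F)) (L : SRLat ℓ nv K) : ℕ :=
  finrank F (Submodule.map (SRpi (F := F) L) (SRdual C))

/-- Minimum sum-rank distance of a code. -/
noncomputable def SRminDist (K : Fin ℓ → Type) [∀ i, Field (K i)]
    [∀ i, Algebra (K i) F] (C : Submodule F (SRAmb ℓ nv F)) : ℕ :=
  sInf {w | ∃ c ∈ C, c ≠ 0 ∧ SRwt (K := K) c = w}

/-- The `r`-th generalized sum-rank weight
`d_{SR,r}(C) = min{Rk L : dim_F (C ∩ V_L) ≥ r}`. -/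
noncomputable def SRdgw (K : Fin ℓ → Type) [∀ i, Field (K i)]
    [∀ i, Algebra (K i) F] (C : Submodule F (SRAmb ℓ nv F)) (r : ℕ) : ℕ :=
  sInf {w | ∃ L : SRLat ℓ nv K, r ≤ finrank F ↥(C ⊓ SRVL L) ∧ SRrk L = w}

/-- The sum-matroid axioms (R1), (R2), (R3) for a function `ρ : P(K^n) → ℕ`. -/
def IsSumMatroid (ρ : SRLat ℓ nv K → ℕ) : Prop :=
  (∀ L, ρ L ≤ SRrk L) ∧
  (∀ L L' : SRLat ℓ nv K, L ≤ L' → ρ L ≤ ρ L') ∧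
  (∀ L L' : SRLat ℓ nv K, ρ (L ⊔ L') + ρ (L ⊓ L') ≤ ρ L + ρ L')

/-- The dual rank function `ρ*(L) = ρ(L^⊥) + Rk L − ρ(K^n)`. -/
noncomputable def SRdualRk (ρ : SRLat ℓ nv K → ℕ) (L : SRLat ℓ nv K) : ℕ :=
  ρ (SRlatPerp L) + SRrk L - ρ ⊤

/-- The nullity function `η(L) = Rk L − ρ(L)`. -/
noncomputable def SReta (ρ : SRLat ℓ nv K → ℕ) (L : SRLat ℓ nv K) : ℕ :=
  SRrk L - ρ L

/-- The `i`-th generalized weight of a sum-matroid,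
`d_i(M) = min{Rk L : η(L) = i}`. -/
noncomputable def SRgw (ρ : SRLat ℓ nv K → ℕ) (i : ℕ) : ℕ :=
  sInf {w | ∃ L : SRLat ℓ nv K, SReta ρ L = i ∧ SRrk L = w}


section SMAux

variable {ℓ : ℕ} {nv : Fin ℓ → ℕ} {K : Fin ℓ → Type} [∀ i, Field (K i)]

open Submodule

/-- The dot-product bilinear form on `Fin m → k`. -/
def SRdotB (k : Type) [Field k] (m : ℕ) : LinearMap.BilinForm k (Fin m → k) :=
  LinearMap.mk₂ k (fun v w => ∑ t, v t * w t)
    (fun a b w => by simp [add_mul, Finset.sum_add_distrib])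
    (fun c a w => by simp [Finset.mul_sum, mul_assoc])
    (fun v a b => by simp [mul_add, Finset.sum_add_distrib])
    (fun c v w => by simp [Finset.mul_sum, mul_left_comm])

lemma SRdotB_apply {k : Type} [Field k] {m : ℕ} (v w : Fin m → k) :
    SRdotB k m v w = ∑ t, v t * w t := rfl

lemma SRdotB_nondeg (k : Type) [Field k] (m : ℕ) : (SRdotB k m).Nondegenerate := by
  constructor
  all_goals
    intro v hv
    funext t
    have := hv (Pi.single t 1)
    simpa [SRdotB_apply, Pi.single_apply] using this

lemma SRdotB_refl (k : Type) [Field k] (m : ℕ) : (SRdotB k m).IsRefl := by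
  intro x y h
  simpa [SRdotB_apply, mul_comm] using h

lemma SRorth_eq {k : Type} [Field k] {m : ℕ} (W : Submodule k (Fin m → k)) :
    SRorth W = (SRdotB k m).orthogonal W := by
  ext v
  constructor
  · intro h w hw
    have := h w hw
    simpa [LinearMap.BilinForm.IsOrtho, SRdotB_apply, mul_comm] using this
  · intro h w hw
    have := h w hw
    simpa [LinearMap.BilinForm.IsOrtho, SRdotB_apply, mul_comm] using this

lemma finrank_add_SRorth {k : Type} [Field k] {m : ℕ} (W : Submodule k (Fin m → k)) :
    Module.finrank k W + Module.finrank k (SRorth W) = m := by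
  have h1 : Module.finrank k (Fin m → k) = m := Module.finrank_fin_fun k
  have h2 := LinearMap.BilinForm.finrank_orthogonal (SRdotB_nondeg k m) W
  have h3 : Module.finrank k W ≤ m := le_trans W.finrank_le (le_of_eq h1)
  rw [SRorth_eq, h2, h1]
  omega

lemma SRrk_add_perp (L : SRLat ℓ nv K) :
    SRrk L + SRrk (SRlatPerp L) = ∑ i, nv i := by
  rw [SRrk, SRrk, ← Finset.sum_add_distrib]
  exact Finset.sum_congr rfl fun i _ => finrank_add_SRorth (L i)

lemma SRrk_mono {L L' : SRLat ℓ nv K} (h : L ≤ L') : SRrk L ≤ SRrk L' :=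
  Finset.sum_le_sum fun i _ => Submodule.finrank_mono (h i)

lemma SRrk_le_sum (L : SRLat ℓ nv K) : SRrk L ≤ ∑ i, nv i :=
  Finset.sum_le_sum fun i _ =>
    le_trans (L i).finrank_le (le_of_eq (Module.finrank_fin_fun (K i)))

lemma SRrk_top : SRrk (⊤ : SRLat ℓ nv K) = ∑ i, nv i :=
  Finset.sum_congr rfl fun i _ => by
    rw [show (⊤ : SRLat ℓ nv K) i = ⊤ from rfl, finrank_top, Module.finrank_fin_fun]

lemma SRLat_eq_of_le_of_rk_le {L L' : SRLat ℓ nv K} (h : L ≤ L')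
    (h2 : SRrk L' ≤ SRrk L) : L = L' := by
  have hle : ∀ i ∈ Finset.univ, Module.finrank (K i) (L i) ≤ Module.finrank (K i) (L' i) :=
    fun i _ => Submodule.finrank_mono (h i)
  have hsum : SRrk L = SRrk L' := le_antisymm (Finset.sum_le_sum hle) h2
  have heach := (Finset.sum_eq_sum_iff_of_le hle).mp hsum
  funext i
  exact Submodule.eq_of_le_of_finrank_le (h i) (heach i (Finset.mem_univ i)).ge

/-- The rank function increases by at most `d` when `Rk` increases by `d`. -/
lemma SRrho_le_add {ρ : SRLat ℓ nv K → ℕ} (hρ : IsSumMatroid ρ) :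
    ∀ d (L1 L2 : SRLat ℓ nv K), L1 ≤ L2 → SRrk L2 ≤ SRrk L1 + d → ρ L2 ≤ ρ L1 + d := by
  intro d
  induction d with
  | zero =>
    intro L1 L2 h h2
    rw [SRLat_eq_of_le_of_rk_le h (by omega)]
    omega
  | succ d ih =>
    intro L1 L2 h h2
    by_cases he : L1 = L2
    · subst he; omega
    · have hex : ∃ i, L1 i ≠ L2 i := by
        by_contra hc
        push_neg at hc
        exact he (funext hc)
      obtain ⟨i, hi⟩ := hex
      obtain ⟨v, hv2, hv1⟩ := SetLike.exists_of_lt (lt_of_le_of_ne (h i) hi)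
      have hv0 : v ≠ 0 := fun h0 => hv1 (h0 ▸ (L1 i).zero_mem)
      classical
      set X : SRLat ℓ nv K := Function.update (⊥ : SRLat ℓ nv K) i
        (Submodule.span (K i) {v}) with hX
      have hXj : ∀ j, j ≠ i → X j = ⊥ := by
        intro j hj
        rw [hX, Function.update_of_ne hj]
        rfl
      have hXi : X i = Submodule.span (K i) {v} := by
        rw [hX, Function.update_self]
      have hXrk : SRrk X ≤ 1 := by
        rw [SRrk]
        rw [Finset.sum_eq_single_of_mem i (Finset.mem_univ i)
          (fun j _ hj => by rw [hXj j hj]; exact finrank_bot _ _)]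
        rw [hXi, finrank_span_singleton hv0]
      have hXle : X ≤ L2 := by
        intro j
        by_cases hj : j = i
        · subst hj
          rw [hXi]
          exact Submodule.span_le.mpr (Set.singleton_subset_iff.mpr hv2)
        · rw [hXj j hj]; exact bot_le
      have hsup_le : L1 ⊔ X ≤ L2 := sup_le h hXle
      have hne : L1 ≠ L1 ⊔ X := by
        intro hc
        apply hv1
        have hvX : v ∈ (L1 ⊔ X) i := by
          have : v ∈ X i := by rw [hXi]; exact Submodule.mem_span_singleton_self v
          exact Submodule.mem_sup_right this
        rwa [← hc] at hvX
      have hlt : SRrk L1 < SRrk (L1 ⊔ X) := by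
        rcases lt_or_ge (SRrk L1) (SRrk (L1 ⊔ X)) with h' | h'
        · exact h'
        · exact absurd (SRLat_eq_of_le_of_rk_le le_sup_left h') hne
      have hstep : ρ (L1 ⊔ X) ≤ ρ L1 + 1 := by
        have h3 := hρ.2.2 L1 X
        have h1 := hρ.1 X
        omega
      have hrec := ih (L1 ⊔ X) L2 hsup_le (by omega)
      omega

/-- Existence of a codimension-one subspace. -/
lemma SRexists_codim_one {k : Type} [Field k] {m : ℕ} (W : Submodule k (Fin m → k))
    (hW : 0 < Module.finrank k W) :
    ∃ W' : Submodule k (Fin m → k), W' ≤ W ∧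
      Module.finrank k W' + 1 = Module.finrank k W := by
  set d := Module.finrank k W with hd
  have b := Module.finBasis k W
  let f : Fin (d - 1) → (Fin m → k) := fun j => (b (Fin.castLE (by omega) j) : Fin m → k)
  have hli : LinearIndependent k f := by
    have h1 : LinearIndependent k (fun j => ((b j : W) : Fin m → k)) :=
      b.linearIndependent.map' W.subtype W.ker_subtype
    exact h1.comp (Fin.castLE (by omega)) (Fin.castLE_injective _)
  refine ⟨Submodule.span k (Set.range f), ?_, ?_⟩
  · rw [Submodule.span_le]
    rintro x ⟨j, rfl⟩
    exact (b (Fin.castLE (by omega) j)).2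
  · rw [finrank_span_eq_card hli]
    simp only [Fintype.card_fin]
    omega

/-- Intermediate value theorem for the nullity. -/
lemma SRexists_eta {ρ : SRLat ℓ nv K → ℕ} (hρ : IsSumMatroid ρ) :
    ∀ N (L : SRLat ℓ nv K), SRrk L ≤ N → ∀ r, r ≤ SReta ρ L →
      ∃ L', L' ≤ L ∧ SReta ρ L' = r := by
  intro N
  induction N with
  | zero =>
    intro L hN r hr
    have h1 := hρ.1 L
    have h0 : SReta ρ L = 0 := by rw [SReta]; omega
    exact ⟨L, le_refl L, by omega⟩
  | succ N ih =>
    intro L hN r hr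
    by_cases h : SReta ρ L = r
    · exact ⟨L, le_refl L, h⟩
    · have hlt : r < SReta ρ L := lt_of_le_of_ne hr (Ne.symm h)
      have hρL := hρ.1 L
      rw [SReta] at hlt
      have hrkpos : 0 < SRrk L := by omega
      have hex : ∃ i, 0 < Module.finrank (K i) (L i) := by
        by_contra hc
        push_neg at hc
        have h0 : SRrk L = 0 := Finset.sum_eq_zero fun i _ => by have := hc i; omega
        omega
      obtain ⟨i, hi⟩ := hex
      obtain ⟨W', hW'le, hW'rk⟩ := SRexists_codim_one (L i) hi
      classical
      set L'' : SRLat ℓ nv K := Function.update L i W' with hL''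
      have hL''le : L'' ≤ L := by
        intro j
        by_cases hj : j = i
        · subst hj
          rw [hL'', Function.update_self]
          exact hW'le
        · rw [hL'', Function.update_of_ne hj]
      have hfun : (fun j => Module.finrank (K j) (L'' j)) =
          Function.update (fun j => Module.finrank (K j) (L j)) i
            (Module.finrank (K i) W') := by
        funext j
        by_cases hj : j = i
        · subst hj
          rw [hL'', Function.update_self, Function.update_self]
        · rw [hL'', Function.update_of_ne hj, Function.update_of_ne hj]
      have hL''rk : SRrk L'' + 1 = SRrk L := by
        rw [SRrk, SRrk, hfun, Finset.sum_update_of_mem (Finset.mem_univ i),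
          ← Finset.add_sum_erase Finset.univ _ (Finset.mem_univ i),
          Finset.sdiff_singleton_eq_erase]
        omega
      have hρ'' : ρ L'' ≤ ρ L := hρ.2.1 L'' L hL''le
      have hρ''le : ρ L'' ≤ SRrk L'' := hρ.1 L''
      have hr'' : r ≤ SReta ρ L'' := by rw [SReta]; omega
      obtain ⟨L', h1, h2⟩ := ih L'' (by omega) r hr''
      exact ⟨L', h1.trans hL''le, h2⟩

end SMAux

/-- For a sum-matroid `M` of rank `k`, fix `1 ≤ r ≤ n − k` and
set `t = k + r − d_r`.  For every `s > 0` with `1 ≤ t + s ≤ k`,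
`d_{t+s}^⊥ ≠ n − d_r + 1`. -/
theorem stmt15_dual_gw_ne
    {ℓ : ℕ} (hℓ : 0 < ℓ) {nv : Fin ℓ → ℕ} (hnv : ∀ i, 0 < nv i)
    {F : Type} [Field F] [Finite F]
    {K : Fin ℓ → Type} [∀ i, Field (K i)] [∀ i, Finite (K i)]
    [∀ i, Algebra (K i) F] [∀ i, FiniteDimensional (K i) F]
    (ρ : SRLat ℓ nv K → ℕ) (hρ : IsSumMatroid ρ)
    (k : ℕ) (hk : ρ (⊤ : SRLat ℓ nv K) = k)
    (r : ℕ) (hr1 : 1 ≤ r) (hr2 : r ≤ (∑ i, nv i) - k)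
    (s : ℕ) (hs : 0 < s)
    (hts1 : 1 ≤ k + r - SRgw ρ r + s) (hts2 : k + r - SRgw ρ r + s ≤ k) :
    SRgw (SRdualRk ρ) (k + r - SRgw ρ r + s) ≠ (∑ i, nv i) - SRgw ρ r + 1 := by
  classical
  intro hcon
  set n := ∑ i, nv i with hn
  set D := SRgw ρ r with hD
  have hmono := hρ.2.1
  have hR1 := hρ.1
  have hrk_top : SRrk (⊤ : SRLat ℓ nv K) = n := SRrk_top
  have hkn : k ≤ n := by
    have := hR1 ⊤
    rw [hk, hrk_top] at this
    exact this
  -- a witness for the r-th generalized weight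
  have hex : ∃ L', L' ≤ (⊤ : SRLat ℓ nv K) ∧ SReta ρ L' = r := by
    apply SRexists_eta hρ (SRrk (⊤ : SRLat ℓ nv K)) _ le_rfl
    rw [SReta, hk, hrk_top]
    exact hr2
  obtain ⟨M0, _, hM0⟩ := hex
  have hSne : {w | ∃ L : SRLat ℓ nv K, SReta ρ L = r ∧ SRrk L = w}.Nonempty :=
    ⟨SRrk M0, M0, hM0, rfl⟩
  obtain ⟨M, hMeta, hMrk⟩ := Nat.sInf_mem hSne
  have hMrk' : SRrk M = D := hMrk
  rw [SReta] at hMeta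
  have hρM := hR1 M
  have hρMk : ρ M ≤ k := by
    have := hmono M ⊤ le_top
    omega
  have hDr : r ≤ D := by omega
  have hDk : D ≤ k + r := by omega
  have hDn : D ≤ n := hMrk' ▸ SRrk_le_sum M
  -- a witness for the dual generalized weight
  have hne2 : {w | ∃ L : SRLat ℓ nv K,
      SReta (SRdualRk ρ) L = k + r - D + s ∧ SRrk L = w}.Nonempty := by
    by_contra hemp
    rw [Set.not_nonempty_iff_eq_empty] at hemp
    have h0 : SRgw (SRdualRk ρ) (k + r - D + s) = 0 := by
      rw [SRgw, hemp, Nat.sInf_empty]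
    omega
  obtain ⟨L, hLeta, hLrk⟩ := Nat.sInf_mem hne2
  have hLrk' : SRrk L = n - D + 1 := hLrk.trans hcon
  have hperp : SRrk L + SRrk (SRlatPerp L) = n := SRrk_add_perp L
  have hchain : ρ (⊤ : SRLat ℓ nv K) ≤ ρ (SRlatPerp L) + SRrk L :=
    SRrho_le_add hρ (SRrk L) (SRlatPerp L) ⊤ le_top (by omega)
  have hρperp_le : ρ (SRlatPerp L) ≤ k := by
    have := hmono (SRlatPerp L) ⊤ le_top
    omega
  rw [SReta, SRdualRk, hk] at hLeta
  rw [hk] at hchain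
  have hρperpR := hR1 (SRlatPerp L)
  have hperp_eta : r ≤ SReta ρ (SRlatPerp L) := by
    rw [SReta]
    omega
  obtain ⟨L', hL'le, hL'eta⟩ :=
    SRexists_eta hρ (SRrk (SRlatPerp L)) (SRlatPerp L) le_rfl r hperp_eta
  have h1 : D ≤ SRrk L' := Nat.sInf_le ⟨L', hL'eta, rfl⟩
  have h2 : SRrk L' ≤ SRrk (SRlatPerp L) := SRrk_mono hL'le
  omega
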